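/- Let T = [[1,0],[1,1]] ∈ SL₂(ℝ). If a polynomial function p in the four matrix entries (with real coefficients) vanishes on the conjugacy class {g T g⁻¹ : g ∈ SL₂(ℝ)}, then p vanishes on every A ∈ SL₂(ℝ) with tr A = 2. (Thus the Zariski closure of the positive-unipotent class contains the identity and the negative-unipotent class.) -/

import Mathlib

set_option maxRecDepth 10000



open Matrix Polynomial
open scoped MatrixGroups

noncomputable def posUnipotentT : SL(2, ℝ) :=
  ⟨!![1, 0; 1, 1], by norm_num [Matrix.det_fin_two_of]⟩

private lemma aux_bd
    (p : MvPolynomial (Fin 2 × Fin 2) ℝ)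
    (hp : ∀ g : SL(2, ℝ),
      MvPolynomial.eval
        (fun ij => ((g * posUnipotentT * g⁻¹ : SL(2, ℝ)) : Matrix (Fin 2) (Fin 2) ℝ) ij.1 ij.2)
        p = 0)
    (b d : ℝ) (hs : 0 < b^2 + d^2) :
    MvPolynomial.eval
      (fun ij => (!![1 + b*d, -b^2; d^2, 1 - b*d] : Matrix (Fin 2) (Fin 2) ℝ) ij.1 ij.2)
      p = 0 := by
  have hs0 : b^2 + d^2 ≠ 0 := ne_of_gt hs
  have hdet : (!![d/(b^2+d^2), b; -b/(b^2+d^2), d] : Matrix (Fin 2) (Fin 2) ℝ).det = 1 := by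
    rw [Matrix.det_fin_two_of]; field_simp; ring
  set g : SL(2, ℝ) := ⟨!![d/(b^2+d^2), b; -b/(b^2+d^2), d], hdet⟩ with hg
  have hcoe : ((g * posUnipotentT * g⁻¹ : SL(2, ℝ)) : Matrix (Fin 2) (Fin 2) ℝ)
      = !![1 + b*d, -b^2; d^2, 1 - b*d] := by
    have h1 : ((g * posUnipotentT * g⁻¹ : SL(2, ℝ)) : Matrix (Fin 2) (Fin 2) ℝ)
        = !![d/(b^2+d^2), b; -b/(b^2+d^2), d] * !![1, 0; 1, 1]
            * adjugate !![d/(b^2+d^2), b; -b/(b^2+d^2), d] := by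
      rw [Matrix.SpecialLinearGroup.coe_mul, Matrix.SpecialLinearGroup.coe_mul,
        Matrix.SpecialLinearGroup.coe_inv]; rfl
    rw [h1, Matrix.adjugate_fin_two_of, Matrix.mul_fin_two, Matrix.mul_fin_two]
    ext i j
    fin_cases i <;> fin_cases j <;> simp <;> field_simp <;> ring
  have h := hp g
  simp only [hcoe] at h
  exact h

private lemma aux_all
    (p : MvPolynomial (Fin 2 × Fin 2) ℝ)
    (hp : ∀ g : SL(2, ℝ),
      MvPolynomial.eval
        (fun ij => ((g * posUnipotentT * g⁻¹ : SL(2, ℝ)) : Matrix (Fin 2) (Fin 2) ℝ) ij.1 ij.2)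
        p = 0)
    (β δ : ℝ) (hβδ : β ≠ 0 ∨ δ ≠ 0) (t : ℝ) :
    MvPolynomial.eval
      (fun ij => (!![1 + t*(β*δ), -(t*β^2); t*δ^2, 1 - t*(β*δ)] : Matrix (Fin 2) (Fin 2) ℝ) ij.1 ij.2)
      p = 0 := by
  have hq : ∀ u : ℝ, Polynomial.eval u (MvPolynomial.eval₂ Polynomial.C
      (fun ij : Fin 2 × Fin 2 =>
        (!![1 + Polynomial.C (β*δ) * Polynomial.X, -(Polynomial.C (β^2) * Polynomial.X);
            Polynomial.C (δ^2) * Polynomial.X, 1 - Polynomial.C (β*δ) * Polynomial.X] :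
          Matrix (Fin 2) (Fin 2) (Polynomial ℝ)) ij.1 ij.2) p)
      = MvPolynomial.eval (fun ij : Fin 2 × Fin 2 => Polynomial.eval u
        ((!![1 + Polynomial.C (β*δ) * Polynomial.X, -(Polynomial.C (β^2) * Polynomial.X);
            Polynomial.C (δ^2) * Polynomial.X, 1 - Polynomial.C (β*δ) * Polynomial.X] :
          Matrix (Fin 2) (Fin 2) (Polynomial ℝ)) ij.1 ij.2)) p := by
    intro u
    have h2 : (Polynomial.evalRingHom u).comp (Polynomial.C : ℝ →+* Polynomial ℝ)
        = RingHom.id ℝ := RingHom.ext fun x => Polynomial.eval_C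
    have h1 := MvPolynomial.eval₂_comp_left (Polynomial.evalRingHom u)
      (Polynomial.C : ℝ →+* Polynomial ℝ)
      (fun ij : Fin 2 × Fin 2 =>
        (!![1 + Polynomial.C (β*δ) * Polynomial.X, -(Polynomial.C (β^2) * Polynomial.X);
            Polynomial.C (δ^2) * Polynomial.X, 1 - Polynomial.C (β*δ) * Polynomial.X] :
          Matrix (Fin 2) (Fin 2) (Polynomial ℝ)) ij.1 ij.2) p
    rw [h2] at h1
    exact h1
  have hfev : ∀ u : ℝ, (fun ij : Fin 2 × Fin 2 => Polynomial.eval u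
        ((!![1 + Polynomial.C (β*δ) * Polynomial.X, -(Polynomial.C (β^2) * Polynomial.X);
            Polynomial.C (δ^2) * Polynomial.X, 1 - Polynomial.C (β*δ) * Polynomial.X] :
          Matrix (Fin 2) (Fin 2) (Polynomial ℝ)) ij.1 ij.2))
      = (fun ij => (!![1 + u*(β*δ), -(u*β^2); u*δ^2, 1 - u*(β*δ)] :
          Matrix (Fin 2) (Fin 2) ℝ) ij.1 ij.2) := by
    intro u
    funext ij
    obtain ⟨i, j⟩ := ij
    fin_cases i <;> fin_cases j <;> simp <;> ring
  have hroots : ∀ u : ℝ, 0 < u →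
      Polynomial.eval u (MvPolynomial.eval₂ Polynomial.C
      (fun ij : Fin 2 × Fin 2 =>
        (!![1 + Polynomial.C (β*δ) * Polynomial.X, -(Polynomial.C (β^2) * Polynomial.X);
            Polynomial.C (δ^2) * Polynomial.X, 1 - Polynomial.C (β*δ) * Polynomial.X] :
          Matrix (Fin 2) (Fin 2) (Polynomial ℝ)) ij.1 ij.2) p) = 0 := by
    intro u hu
    rw [hq u, hfev u]
    have hsq : Real.sqrt u * Real.sqrt u = u := Real.mul_self_sqrt hu.le
    have hsqne : Real.sqrt u ≠ 0 := ne_of_gt (Real.sqrt_pos.mpr hu)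
    have hs : 0 < (Real.sqrt u * β)^2 + (Real.sqrt u * δ)^2 := by
      rcases hβδ with h | h
      · have h2 : Real.sqrt u * β ≠ 0 := mul_ne_zero hsqne h
        positivity
      · have h2 : Real.sqrt u * δ ≠ 0 := mul_ne_zero hsqne h
        positivity
    have hkey := aux_bd p hp (Real.sqrt u * β) (Real.sqrt u * δ) hs
    have hm : (!![1 + (Real.sqrt u * β)*(Real.sqrt u * δ), -(Real.sqrt u * β)^2;
        (Real.sqrt u * δ)^2, 1 - (Real.sqrt u * β)*(Real.sqrt u * δ)] :
          Matrix (Fin 2) (Fin 2) ℝ)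
        = !![1 + u*(β*δ), -(u*β^2); u*δ^2, 1 - u*(β*δ)] := by
      ext i j
      fin_cases i <;> fin_cases j <;> simp <;>
        (first
          | linear_combination (β*δ) * hsq
          | linear_combination (β^2) * hsq
          | linear_combination (δ^2) * hsq)
    rwa [hm] at hkey
  have hq0 : MvPolynomial.eval₂ Polynomial.C
      (fun ij : Fin 2 × Fin 2 =>
        (!![1 + Polynomial.C (β*δ) * Polynomial.X, -(Polynomial.C (β^2) * Polynomial.X);
            Polynomial.C (δ^2) * Polynomial.X, 1 - Polynomial.C (β*δ) * Polynomial.X] :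
          Matrix (Fin 2) (Fin 2) (Polynomial ℝ)) ij.1 ij.2) p = 0 := by
    apply Polynomial.eq_zero_of_infinite_isRoot
    apply Set.Infinite.mono _ (Set.Ioi_infinite (0 : ℝ))
    intro u hu
    exact hroots u hu
  have h := hq t
  rw [hq0, hfev t] at h
  simpa using h.symm

/-- A real polynomial in the four matrix entries vanishing on the `SL₂(ℝ)`-conjugacy class of
`T = [[1,0],[1,1]]` vanishes on every `A ∈ SL₂(ℝ)` with `tr A = 2`: the Zariski closure of the
positive-unipotent class contains the identity and the negative-unipotent class. -/
theorem zariski_closure_posUnipotent_class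
    (p : MvPolynomial (Fin 2 × Fin 2) ℝ)
    (hp : ∀ g : SL(2, ℝ),
      MvPolynomial.eval
        (fun ij => ((g * posUnipotentT * g⁻¹ : SL(2, ℝ)) : Matrix (Fin 2) (Fin 2) ℝ) ij.1 ij.2)
        p = 0) :
    ∀ A : SL(2, ℝ), (A : Matrix (Fin 2) (Fin 2) ℝ).trace = 2 →
      MvPolynomial.eval (fun ij => (A : Matrix (Fin 2) (Fin 2) ℝ) ij.1 ij.2) p = 0 := by
  intro A hA
  obtain ⟨a, b, c, d, hAeq⟩ : ∃ a b c d : ℝ,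
      (A : Matrix (Fin 2) (Fin 2) ℝ) = !![a, b; c, d] :=
    ⟨_, _, _, _, by ext i j; fin_cases i <;> fin_cases j <;> rfl⟩
  have htr : a + d = 2 := by
    have h := hA; rw [hAeq, Matrix.trace_fin_two_of] at h; exact h
  have hdet : a * d - b * c = 1 := by
    have h := A.2; rw [hAeq, Matrix.det_fin_two_of] at h; exact h
  have hx : (a - 1)^2 + b * c = 0 := by linear_combination a * htr - hdet
  suffices h : ∃ β δ t : ℝ, (β ≠ 0 ∨ δ ≠ 0) ∧
      (A : Matrix (Fin 2) (Fin 2) ℝ)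
        = !![1 + t*(β*δ), -(t*β^2); t*δ^2, 1 - t*(β*δ)] by
    obtain ⟨β, δ, t, hβδ, hmat⟩ := h
    have hkey := aux_all p hp β δ hβδ t
    simp only [hmat]
    exact hkey
  rcases lt_trichotomy c 0 with hc0 | hc0 | hc0
  · -- c < 0
    have hscne : Real.sqrt (-c) ≠ 0 := ne_of_gt (Real.sqrt_pos.mpr (by linarith))
    have hsc : Real.sqrt (-c) * Real.sqrt (-c) = -c := Real.mul_self_sqrt (by linarith)
    refine ⟨-(a-1)/Real.sqrt (-c), Real.sqrt (-c), -1, Or.inr hscne, ?_⟩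
    rw [hAeq]
    ext i j
    fin_cases i <;> fin_cases j <;> simp <;> (try field_simp) <;> nlinarith [hx, htr, hsc]
  · -- c = 0
    have hbc : b * c = 0 := by rw [hc0]; ring
    have ha2 : (a - 1)^2 = 0 := by linarith [hx, hbc]
    have ha1 : a = 1 := by
      have h3 : a - 1 = 0 := by
        have := pow_eq_zero_iff (n := 2) (by norm_num) |>.mp ha2
        exact this
      linarith
    have hd1 : d = 1 := by linarith
    rcases lt_trichotomy b 0 with hb0 | hb0 | hb0
    · have hsb : Real.sqrt (-b) * Real.sqrt (-b) = -b := Real.mul_self_sqrt (by linarith)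
      refine ⟨Real.sqrt (-b), 0, 1, Or.inl (ne_of_gt (Real.sqrt_pos.mpr (by linarith))), ?_⟩
      rw [hAeq]
      ext i j
      fin_cases i <;> fin_cases j <;> simp [ha1, hc0, hd1] <;> nlinarith [hsb]
    · refine ⟨0, 1, 0, Or.inr one_ne_zero, ?_⟩
      rw [hAeq]
      ext i j
      fin_cases i <;> fin_cases j <;> simp [ha1, hb0, hc0, hd1]
    · have hsb : Real.sqrt b * Real.sqrt b = b := Real.mul_self_sqrt (by linarith)
      refine ⟨Real.sqrt b, 0, -1, Or.inl (ne_of_gt (Real.sqrt_pos.mpr (by linarith))), ?_⟩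
      rw [hAeq]
      ext i j
      fin_cases i <;> fin_cases j <;> simp [ha1, hc0, hd1] <;> nlinarith [hsb]
  · -- 0 < c
    have hscne : Real.sqrt c ≠ 0 := ne_of_gt (Real.sqrt_pos.mpr hc0)
    have hsc : Real.sqrt c * Real.sqrt c = c := Real.mul_self_sqrt hc0.le
    refine ⟨(a-1)/Real.sqrt c, Real.sqrt c, 1, Or.inr hscne, ?_⟩
    rw [hAeq]
    ext i j
    fin_cases i <;> fin_cases j <;> simp <;> (try field_simp) <;> nlinarith [hx, htr, hsc]
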